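/- Entanglement loss bound: for all η and all δ, E(0) - E(δ) ≥ (1/(2·ln 2))·sin²(2η)·sin²δ, where E(δ) = H((1+sqrt(cos²(2η)+sin²δ·sin²(2η)))/2). -/

import Mathlib

open Real Set

noncomputable def binEnt (p : ℝ) : ℝ := -(p * Real.logb 2 p) - (1 - p) * Real.logb 2 (1 - p)

noncomputable def Eent (η δ : ℝ) : ℝ :=
  binEnt ((1 + Real.sqrt (Real.cos (2*η)^2 + Real.sin δ ^2 * Real.sin (2*η)^2)) / 2)

-- artanh-type inequality: 2x ≤ log(1+x) - log(1-x) on [0,1)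
lemma two_mul_le_log_sub {x : ℝ} (hx0 : 0 ≤ x) (hx1 : x < 1) :
    2 * x ≤ Real.log (1 + x) - Real.log (1 - x) := by
  set h : ℝ → ℝ := fun y => Real.log (1 + y) - Real.log (1 - y) - 2 * y with hh
  have key : MonotoneOn h (Ico (0:ℝ) 1) := by
    apply monotoneOn_of_deriv_nonneg (convex_Ico 0 1)
    · apply ContinuousOn.sub (ContinuousOn.sub ?_ ?_) (by fun_prop)
      · apply ContinuousOn.log (by fun_prop)
        intro y hy; simp only [mem_Ico] at hy; nlinarith
      · apply ContinuousOn.log (by fun_prop)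
        intro y hy; simp only [mem_Ico] at hy; nlinarith
    · intro y hy
      rw [interior_Ico] at hy
      obtain ⟨hy0, hy1⟩ := hy
      have h1 : (0:ℝ) < 1 + y := by linarith
      have h2 : (0:ℝ) < 1 - y := by linarith
      have d : HasDerivAt h (1/(1+y) - (-1)/(1-y) - 2) y := by
        have d1 : HasDerivAt (fun y : ℝ => Real.log (1 + y)) (1/(1+y)) y := by
          simpa [Function.comp_def] using (Real.hasDerivAt_log h1.ne').comp y
            ((hasDerivAt_id y).const_add 1)
        have d2 : HasDerivAt (fun y : ℝ => Real.log (1 - y)) ((-1)/(1-y)) y := by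
          have := (Real.hasDerivAt_log h2.ne').comp y
            (((hasDerivAt_id y).neg).const_add 1)
          simpa [div_eq_mul_inv, Function.comp_def] using this
        exact ((d1.sub d2).sub ((hasDerivAt_id y).const_mul 2)).congr_deriv (by ring)
      exact d.differentiableAt.differentiableWithinAt
    · intro y hy
      rw [interior_Ico] at hy
      obtain ⟨hy0, hy1⟩ := hy
      have h1 : (0:ℝ) < 1 + y := by linarith
      have h2 : (0:ℝ) < 1 - y := by linarith
      have d : HasDerivAt h (1/(1+y) - (-1)/(1-y) - 2) y := by
        have d1 : HasDerivAt (fun y : ℝ => Real.log (1 + y)) (1/(1+y)) y := by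
          simpa [Function.comp_def] using (Real.hasDerivAt_log h1.ne').comp y
            ((hasDerivAt_id y).const_add 1)
        have d2 : HasDerivAt (fun y : ℝ => Real.log (1 - y)) ((-1)/(1-y)) y := by
          have := (Real.hasDerivAt_log h2.ne').comp y
            (((hasDerivAt_id y).neg).const_add 1)
          simpa [div_eq_mul_inv, Function.comp_def] using this
        exact ((d1.sub d2).sub ((hasDerivAt_id y).const_mul 2)).congr_deriv (by ring)
      rw [d.deriv]
      rw [div_sub_div _ _ h1.ne' h2.ne', sub_nonneg, le_div_iff₀ (by positivity)]
      nlinarith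
  have h0 : h 0 = 0 := by simp [hh]
  have := key (by simp) (mem_Ico.mpr ⟨hx0, hx1⟩) hx0
  simp only [hh] at this h0
  linarith [h0 ▸ this]

-- G is antitone on [0,1]
noncomputable def Gfun (x : ℝ) : ℝ :=
  Real.negMulLog ((1 + x)/2) + Real.negMulLog ((1 - x)/2) + x^2/2

lemma Gfun_antitone : AntitoneOn Gfun (Icc (0:ℝ) 1) := by
  apply antitoneOn_of_deriv_nonpos (convex_Icc 0 1)
  · unfold Gfun; fun_prop
  · intro x hx
    rw [interior_Icc] at hx
    obtain ⟨hx0, hx1⟩ := hx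
    have h1 : ((1:ℝ) + x)/2 ≠ 0 := by positivity
    have h2 : ((1:ℝ) - x)/2 ≠ 0 := by
      have : (0:ℝ) < (1-x)/2 := by linarith
      exact this.ne'
    have d1 : HasDerivAt (fun y : ℝ => Real.negMulLog ((1+y)/2))
        ((-Real.log ((1+x)/2) - 1) * (1/2)) x := by
      exact (Real.hasDerivAt_negMulLog h1).comp x
        (((hasDerivAt_id x).const_add 1).div_const 2)
    have d2 : HasDerivAt (fun y : ℝ => Real.negMulLog ((1-y)/2))
        ((-Real.log ((1-x)/2) - 1) * (-1/2)) x := by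
      have : HasDerivAt (fun y : ℝ => (1-y)/2) (-1/2) x := by
        simpa [sub_eq_add_neg] using (((hasDerivAt_id x).neg).const_add 1).div_const 2
      exact (Real.hasDerivAt_negMulLog h2).comp x this
    have d3 : HasDerivAt (fun y : ℝ => y^2/2) x x := by
      simpa using (hasDerivAt_pow 2 x).div_const 2
    have d : HasDerivAt Gfun
        ((-Real.log ((1+x)/2) - 1) * (1/2) + (-Real.log ((1-x)/2) - 1) * (-1/2) + x) x :=
      (d1.add d2).add d3
    exact d.differentiableAt.differentiableWithinAt
  · intro x hx
    rw [interior_Icc] at hx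
    obtain ⟨hx0, hx1⟩ := hx
    have h1 : (0:ℝ) < (1 + x)/2 := by linarith
    have h2 : (0:ℝ) < (1 - x)/2 := by linarith
    have d1 : HasDerivAt (fun y : ℝ => Real.negMulLog ((1+y)/2))
        ((-Real.log ((1+x)/2) - 1) * (1/2)) x := by
      exact (Real.hasDerivAt_negMulLog h1.ne').comp x
        (((hasDerivAt_id x).const_add 1).div_const 2)
    have d2 : HasDerivAt (fun y : ℝ => Real.negMulLog ((1-y)/2))
        ((-Real.log ((1-x)/2) - 1) * (-1/2)) x := by
      have : HasDerivAt (fun y : ℝ => (1-y)/2) (-1/2) x := by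
        simpa [sub_eq_add_neg] using (((hasDerivAt_id x).neg).const_add 1).div_const 2
      exact (Real.hasDerivAt_negMulLog h2.ne').comp x this
    have d3 : HasDerivAt (fun y : ℝ => y^2/2) x x := by
      simpa using (hasDerivAt_pow 2 x).div_const 2
    have d : HasDerivAt Gfun
        ((-Real.log ((1+x)/2) - 1) * (1/2) + (-Real.log ((1-x)/2) - 1) * (-1/2) + x) x :=
      (d1.add d2).add d3
    rw [d.deriv]
    have hlog := two_mul_le_log_sub hx0.le hx1
    have e1 : Real.log ((1+x)/2) = Real.log (1+x) - Real.log 2 :=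
      Real.log_div (by linarith) two_ne_zero
    have e2 : Real.log ((1-x)/2) = Real.log (1-x) - Real.log 2 :=
      Real.log_div (by linarith) two_ne_zero
    rw [e1, e2]; ring_nf; linarith

theorem stmt_11 (η δ : ℝ) :
    Eent η 0 - Eent η δ ≥ Real.sin (2*η)^2 * Real.sin δ ^2 / (2 * Real.log 2) := by
  have hlog2 : (0:ℝ) < Real.log 2 := Real.log_pos one_lt_two
  set s := Real.sin (2*η)^2 with hsdef
  set c := Real.cos (2*η)^2 with hcdef
  set t := Real.sin δ^2 with htdef
  have hs : 0 ≤ s := sq_nonneg _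
  have hc : 0 ≤ c := sq_nonneg _
  have ht0 : 0 ≤ t := sq_nonneg _
  have ht1 : t ≤ 1 := Real.sin_sq_le_one δ
  have hcs : c + s = 1 := by rw [hsdef, hcdef]; exact Real.cos_sq_add_sin_sq _
  set a := Real.sqrt c with hadef
  set b := Real.sqrt (c + t*s) with hbdef
  have hts : 0 ≤ t*s := mul_nonneg ht0 hs
  have ha0 : 0 ≤ a := Real.sqrt_nonneg _
  have hab : a ≤ b := Real.sqrt_le_sqrt (by linarith)
  have hb1 : b ≤ 1 := by
    rw [show (1:ℝ) = Real.sqrt 1 by simp, hbdef]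
    exact Real.sqrt_le_sqrt (by nlinarith)
  have ha2 : a^2 = c := Real.sq_sqrt hc
  have hb2 : b^2 = c + t*s := Real.sq_sqrt (by linarith)
  have hE0 : Eent η 0 = binEnt ((1+a)/2) := by
    simp [Eent, hadef, hcdef]
  have hEδ : Eent η δ = binEnt ((1+b)/2) := by
    simp [Eent, hbdef, hcdef, hsdef, htdef, mul_comm]
  have hf : ∀ x : ℝ, binEnt ((1+x)/2) = (Gfun x - x^2/2)/Real.log 2 := by
    intro x
    have h1 : (1:ℝ) - (1+x)/2 = (1-x)/2 := by ring
    simp only [binEnt, Gfun, Real.logb, Real.negMulLog, h1]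
    field_simp
    ring
  have hG : Gfun b ≤ Gfun a :=
    Gfun_antitone ⟨ha0, hab.trans hb1⟩ ⟨ha0.trans hab, hb1⟩ hab
  have key : t*s/2 ≤ (Gfun a - a^2/2) - (Gfun b - b^2/2) := by
    rw [ha2, hb2]; linarith
  rw [hE0, hEδ, hf, hf]
  calc s * t / (2 * Real.log 2) = (t*s/2)/Real.log 2 := by ring
    _ ≤ ((Gfun a - a^2/2) - (Gfun b - b^2/2))/Real.log 2 := by gcongr
    _ = (Gfun a - a^2/2)/Real.log 2 - (Gfun b - b^2/2)/Real.log 2 := by ring
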